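/- Let S, C, N₀, N₁ ∈ ℝ with S² + C² = 1, and let z₀, z₁ > 0. Then the determinant of the 2×2 matrix with rows [ (N₀S − √z₀·C)/√z₁ , S/(2√(z₀z₁)) ] and [ 2(N₀N₁ − √(z₀z₁))S − 2(N₀√z₁ + N₁√z₀)C , (N₁S − √z₁·C)/√z₀ ] equals 1. -/

import Mathlib

/-- The Jacobian of the impact map `P_I` in the area-preserving coordinates
`(φ, z)` with `z = v²` has determinant `1`, where `S = sin (t₁ - t₀)`,
`C = cos (t₁ - t₀)` and `N_i` are the accelerations just before the impacts. -/
theorem impact_map_jacobian_det_area_preserving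
    (S C N₀ N₁ z₀ z₁ : ℝ) (h : S ^ 2 + C ^ 2 = 1) (hz₀ : 0 < z₀) (hz₁ : 0 < z₁) :
    (Matrix.det !![(N₀ * S - Real.sqrt z₀ * C) / Real.sqrt z₁,
        S / (2 * Real.sqrt (z₀ * z₁));
        2 * (N₀ * N₁ - Real.sqrt (z₀ * z₁)) * S -
          2 * (N₀ * Real.sqrt z₁ + N₁ * Real.sqrt z₀) * C,
        (N₁ * S - Real.sqrt z₁ * C) / Real.sqrt z₀]) = 1 := by
  have hs0 : 0 < Real.sqrt z₀ := Real.sqrt_pos.mpr hz₀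
  have hs1 : 0 < Real.sqrt z₁ := Real.sqrt_pos.mpr hz₁
  rw [Real.sqrt_mul hz₀.le, Matrix.det_fin_two_of]
  field_simp
  linear_combination (Real.sqrt z₀ * Real.sqrt z₁) * h
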